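/- Suppose that the holomorphic function of one complex variable b ↦ ρ(0, b, 0) is not identically zero on any neighborhood of 0 in ℂ. Then 0 is an isolated point of the fiber F⁻¹(0): there is a neighborhood U of 0 in ℂⁿ such that every t ∈ U with F(t) = 0 satisfies t = 0. (This is the implication (ii) ⇒ (i) of Proposition 3.1: the parametrization of M extends to a finite holomorphic map.) -/

import Mathlib

open Complex Filter Topology

set_option maxHeartbeats 1000000

/-- Proposition 3.1, (ii) ⇒ (i): if ρ(0, ·, 0) is not identically zero near 0,
then 0 is an isolated point of the fiber F⁻¹(0). -/
theorem stmt0 (n : ℕ) (hn : 2 ≤ n)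
    (ρ : ℂ × ℂ × (Fin (n - 2) → ℂ) → ℂ)
    (r : ℂ × ℂ × (Fin (n - 2) → ℂ) → (Fin (n - 2) → ℂ))
    (hρ : ∀ᶠ x in 𝓝 (0 : ℂ × ℂ × (Fin (n - 2) → ℂ)), DifferentiableAt ℂ ρ x)
    (hr : ∀ᶠ x in 𝓝 (0 : ℂ × ℂ × (Fin (n - 2) → ℂ)), DifferentiableAt ℂ r x)
    (hρ0 : ρ 0 = 0) (hdρ0 : fderiv ℂ ρ 0 = 0)
    (hr0 : r 0 = 0) (hdr0 : fderiv ℂ r 0 = 0)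
    (hrb : ∀ᶠ b in 𝓝 (0 : ℂ), r (0, b, 0) = 0)
    (F : ℂ × (Fin (n - 2) → ℂ) × ℂ → ℂ × (Fin (n - 2) → ℂ) × ℂ)
    (hF : ∀ t : ℂ × (Fin (n - 2) → ℂ) × ℂ,
      F t = (t.1 + I * t.2.2,
             t.2.1 + I • r (t.1 + I * t.2.2, t.1 - I * t.2.2, t.2.1),
             ρ (t.1 + I * t.2.2, t.1 - I * t.2.2, t.2.1)))
    (hnz : ¬ ∀ᶠ b in 𝓝 (0 : ℂ), ρ (0, b, 0) = 0) :
    ∃ U ∈ 𝓝 (0 : ℂ × (Fin (n - 2) → ℂ) × ℂ), ∀ t ∈ U, F t = 0 → t = 0 := by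
  classical
  -- norm of a triple whose first coordinate vanishes
  have hn0 : ∀ (b : ℂ) (w : Fin (n-2) → ℂ), ‖((0:ℂ), b, w)‖ = max ‖b‖ ‖w‖ := by
    intro b w
    rw [Prod.norm_def, Prod.norm_def, norm_zero]
    exact max_eq_right (le_max_of_le_left (norm_nonneg b))
  -- little-o estimate for r at 0
  have hrd0 : DifferentiableAt ℂ r 0 := hr.self_of_nhds
  have h1 : HasFDerivAt r (0 : (ℂ × ℂ × (Fin (n-2) → ℂ)) →L[ℂ] (Fin (n-2) → ℂ)) 0 := by
    rw [← hdr0]; exact hrd0.hasFDerivAt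
  have hlo : (fun x => r x) =o[𝓝 (0 : ℂ × ℂ × (Fin (n-2) → ℂ))] (fun x => x) := by
    have := hasFDerivAt_iff_isLittleO_nhds_zero.mp h1
    simpa [hr0] using this
  have hbound : ∀ᶠ x in 𝓝 (0 : ℂ × ℂ × (Fin (n-2) → ℂ)), ‖r x‖ ≤ (1/4) * ‖x‖ :=
    hlo.bound (by norm_num)
  obtain ⟨δ, hδpos, hδ⟩ := Metric.eventually_nhds_iff_ball.mp (hr.and hbound)
  obtain ⟨δb, hδbpos, hδb⟩ := Metric.eventually_nhds_iff_ball.mp hrb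
  obtain ⟨δρ, hδρpos, hδρ⟩ := Metric.eventually_nhds_iff_ball.mp hρ
  -- the one-variable function q b = ρ (0, b, 0) is analytic at 0
  set q : ℂ → ℂ := fun b => ρ (0, b, 0) with hqdef
  have hqa : AnalyticAt ℂ q 0 := by
    apply DifferentiableOn.analyticAt (s := Metric.ball (0:ℂ) δρ)
    · intro c hc
      have hc' : ‖c‖ < δρ := by rwa [Metric.mem_ball, dist_zero_right] at hc
      have hcmem : ((0:ℂ), c, (0 : Fin (n-2) → ℂ)) ∈
          Metric.ball (0 : ℂ × ℂ × (Fin (n-2) → ℂ)) δρ := by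
        rw [Metric.mem_ball, dist_zero_right, hn0, norm_zero]
        simpa [norm_nonneg] using hc'
      have hρc : DifferentiableAt ℂ ρ ((0:ℂ), c, (0 : Fin (n-2) → ℂ)) := hδρ _ hcmem
      have hL : DifferentiableAt ℂ (fun c : ℂ => ((0:ℂ), c, (0 : Fin (n-2) → ℂ))) c :=
        DifferentiableAt.prodMk (differentiableAt_const _) (DifferentiableAt.prodMk (differentiableAt_id) (differentiableAt_const _))
      exact (hρc.comp c hL).differentiableWithinAt
    · exact Metric.ball_mem_nhds _ hδρpos
  -- zeros of q are isolated
  have hqz : ∀ᶠ c in 𝓝[≠] (0:ℂ), q c ≠ 0 := by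
    rcases hqa.eventually_eq_zero_or_eventually_ne_zero with h | h
    · exact absurd h hnz
    · exact h
  rw [eventually_nhdsWithin_iff] at hqz
  obtain ⟨δ₂, hδ₂pos, hδ₂⟩ := Metric.eventually_nhds_iff_ball.mp hqz
  -- choose the neighborhood
  set η : ℝ := min (min (δ/4) (δb/2)) (δ₂/2) with hηdef
  have hηpos : 0 < η := by
    apply lt_min (lt_min _ _) <;> positivity
  refine ⟨Metric.ball 0 η, Metric.ball_mem_nhds _ hηpos, ?_⟩
  rintro ⟨t1, t', tn⟩ htU hFt
  rw [Metric.mem_ball, dist_zero_right] at htU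
  rw [Prod.norm_def, Prod.norm_def, sup_lt_iff, sup_lt_iff] at htU
  obtain ⟨ht1, ht', htn⟩ := htU
  rw [hF] at hFt
  rw [show ((0 : ℂ × (Fin (n-2) → ℂ) × ℂ)) = (0, 0, 0) from rfl, Prod.mk.injEq, Prod.mk.injEq]
    at hFt
  obtain ⟨h1c, h2c, h3c⟩ := hFt
  change t1 + I * tn = 0 at h1c
  change t' + I • r (t1 + I * tn, t1 - I * tn, t') = 0 at h2c
  change ρ (t1 + I * tn, t1 - I * tn, t') = 0 at h3c
  set b : ℂ := t1 - I * tn with hbdef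
  rw [h1c] at h2c h3c
  have hbn : ‖b‖ < 2 * η := by
    calc ‖t1 - I * tn‖ ≤ ‖t1‖ + ‖I * tn‖ := norm_sub_le _ _
    _ = ‖t1‖ + ‖tn‖ := by rw [norm_mul, Complex.norm_I, one_mul]
    _ < 2 * η := by linarith
  have hηδ : η ≤ δ/4 := le_trans (min_le_left _ _) (min_le_left _ _)
  have hηδb : η ≤ δb/2 := le_trans (min_le_left _ _) (min_le_right _ _)
  have hηδ2 : η ≤ δ₂/2 := min_le_right _ _
  have hbδ2 : ‖b‖ < δ/2 := by linarith
  have hbδb : ‖b‖ < δb := by linarith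
  have hbδ₂ : ‖b‖ < δ₂ := by linarith
  have h2c' : t' + I • r (0, b, t') = 0 := h2c
  have hrb0 : r ((0:ℂ), b, (0 : Fin (n-2) → ℂ)) = 0 := by
    apply hδb
    rw [Metric.mem_ball, dist_zero_right]; exact hbδb
  -- Step 1: t' = 0
  have ht'0 : t' = 0 := by
    by_contra ht'ne
    have ht'pos : 0 < ‖t'‖ := norm_pos_iff.mpr ht'ne
    have ht'δ : ‖t'‖ < δ/4 := lt_of_lt_of_le ht' hηδ
    set R₁ : ℝ := δ / (2 * ‖t'‖) with hR₁def
    have hR₁pos : 0 < R₁ := by positivity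
    set h : ℂ → (Fin (n-2) → ℂ) := fun z => r (0, b, z • t') with hhdef
    -- points stay well inside the ball of radius δ
    have hgz : ∀ z ∈ Metric.ball (0:ℂ) R₁, ‖((0:ℂ), b, z • t')‖ < δ/2 := by
      intro z hz
      rw [Metric.mem_ball, dist_zero_right] at hz
      rw [hn0]
      refine max_lt hbδ2 ?_
      rw [norm_smul]
      calc ‖z‖ * ‖t'‖ < R₁ * ‖t'‖ := mul_lt_mul_of_pos_right hz ht'pos
      _ = δ/2 := by rw [hR₁def]; field_simp
    have hgmem : ∀ z ∈ Metric.ball (0:ℂ) R₁,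
        ((0:ℂ), b, z • t') ∈ Metric.ball (0 : ℂ × ℂ × (Fin (n-2) → ℂ)) δ := by
      intro z hz
      rw [Metric.mem_ball, dist_zero_right]
      linarith [hgz z hz]
    -- h is differentiable on the disk
    have hd : DifferentiableOn ℂ h (Metric.ball (0:ℂ) R₁) := by
      intro z hz
      have hrdz : DifferentiableAt ℂ r ((0:ℂ), b, z • t') := (hδ _ (hgmem z hz)).1
      have hLz : DifferentiableAt ℂ (fun z : ℂ => ((0:ℂ), b, z • t')) z :=
        DifferentiableAt.prodMk (differentiableAt_const _) (DifferentiableAt.prodMk (differentiableAt_const _)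
          ((differentiableAt_id).smul_const t'))
      exact (hrdz.comp z hLz).differentiableWithinAt
    have hh0 : h 0 = 0 := by
      rw [hhdef]; simp only [zero_smul]; exact hrb0
    -- h maps the disk of radius R₁ into the ball of radius δ/4 around h 0 = 0
    have hmaps : Set.MapsTo h (Metric.ball (0:ℂ) R₁) (Metric.ball (h 0) (δ/4)) := by
      intro z hz
      rw [hh0, Metric.mem_ball, dist_zero_right]
      have hb1 : ‖r ((0:ℂ), b, z • t')‖ ≤ (1/4) * ‖((0:ℂ), b, z • t')‖ :=
        (hδ _ (hgmem z hz)).2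
      have := hgz z hz
      calc ‖h z‖ = ‖r ((0:ℂ), b, z • t')‖ := rfl
      _ ≤ (1/4) * ‖((0:ℂ), b, z • t')‖ := hb1
      _ < δ/4 := by linarith
    -- Schwarz lemma
    have h1mem : (1:ℂ) ∈ Metric.ball (0:ℂ) R₁ := by
      rw [Metric.mem_ball, dist_zero_right, norm_one, hR₁def]
      rw [lt_div_iff₀ (by positivity)]
      linarith
    have hschwarz := Complex.dist_le_div_mul_dist_of_mapsTo_ball hd (hmaps.mono_right Metric.ball_subset_closedBall) h1mem
    rw [hh0] at hschwarz
    have hdist1 : dist (1:ℂ) 0 = 1 := by simp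
    rw [hdist1, mul_one] at hschwarz
    have hRR : (δ/4) / R₁ = ‖t'‖/2 := by
      rw [hR₁def]; field_simp; ring
    rw [hRR] at hschwarz
    have hh1 : h 1 = r (0, b, t') := by rw [hhdef]; simp only [one_smul]
    rw [hh1, dist_zero_right] at hschwarz
    -- but t' = -(I • r (0, b, t'))
    have ht'eq : t' = -(I • r (0, b, t')) := eq_neg_of_add_eq_zero_left h2c'
    have hnt' : ‖t'‖ = ‖r (0, b, t')‖ := by
      conv_lhs => rw [ht'eq]
      rw [norm_neg, norm_smul, Complex.norm_I, one_mul]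
    rw [← hnt'] at hschwarz
    linarith
  -- Step 2: b = 0
  have hb0 : b = 0 := by
    by_contra hbne
    have : q b ≠ 0 := by
      apply hδ₂ b
      · rw [Metric.mem_ball, dist_zero_right]; exact hbδ₂
      · simpa using hbne
    apply this
    have h3c'' := h3c
    rw [ht'0] at h3c''
    exact h3c''
  -- Step 3: conclude
  have ha0 : t1 + I * tn = 0 := h1c
  have hb0' : t1 - I * tn = 0 := hb0
  have ht10 : t1 = 0 := by linear_combination (ha0 + hb0') / 2
  have htn0 : tn = 0 := by
    have : I * tn = 0 := by linear_combination (ha0 - hb0') / 2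
    rcases mul_eq_zero.mp this with h | h
    · exact absurd h I_ne_zero
    · exact h
  rw [ht10, ht'0, htn0]
  rfl
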